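/- arXiv:1812.09723 — 3 statements merged into one kernel-verified Lean document; each statement's English description precedes it below -/
import Mathlib

section
/- Let $(S,\mathcal{A},\mu)$ be a finite measure space, $H$ a separable real Hilbert space, $\lambda>0$ and $\alpha\in(0,1)$. Let $f\colon S\times\mathbb{R}\times H\to\mathbb{R}$ be measurable and suppose that for $\mu$-a.e. $s\in S$: (a) $(y,z)\mapsto f(s,y,z)$ is continuous; (b) $|f(s,y,z)|\le\lambda(1+|y|^{\alpha}+\|z\|^{\alpha})$ for all $(y,z)$; (c) for every $M\in\mathbb{N}$ there is a constant $L_M>0$ (independent of $s$) with $|f(s,y,z)-f(s,y',z')|\le L_M(|y-y'|+\|z-z'\|)$ whenever $|y|,|y'|\le M$ and $\|z\|,\|z'\|\le M$. Then there exists a sequence of measurable functions $f_n\colon S\times\mathbb{R}\times H\to\mathbb{R}$ such that: (i) for each $n$ there is a constant $K_n$ with $|f_n(s,y,z)-f_n(s,y',z')|\le K_n(|y-y'|+\|z-z'\|)$ for a.e. $s$ and all $(y,z),(y',z')$; (ii) $\sup_n |f_n(s,y,z)|\le |f(s,y,z)|\le\lambda(1+|y|^{\alpha}+\|z\|^{\alpha})$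 for a.e. $s$ and all $(y,z)$; (iii) for every $M>0$, $\Phi_M(f_n-f):=\big(\int_S \sup_{|y|\le M,\;\|z\|\le M}|f_n(s,y,z)-f(s,y,z)|^{2}\,\mu(ds)\big)^{1/2}\to 0$ as $n\to\infty$. -/
open Filter MeasureTheory

/-- Approximation lemma for locally Lipschitz BSDE generators: if `f : S × ℝ × H → ℝ` is
measurable, a.e. continuous in `(y,z)`, a.e. of sublinear growth
`|f(s,y,z)| ≤ λ(1+|y|^α+‖z‖^α)` with `α ∈ (0,1)`, and Lipschitz on every ball `B(0,M)`
with a constant `L_M` independent of `s`, then there is a sequence of measurable functions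
`fₙ` which are (i) globally Lipschitz in `(y,z)` uniformly a.e. in `s`, (ii) dominated by
`|f|`, and (iii) such that `Φ_M(fₙ - f) → 0` for every `M > 0`, where
`Φ_M(g) = (∫_S sup_{|y|≤M, ‖z‖≤M} |g(s,y,z)|² μ(ds))^{1/2}`. -/
theorem stmt_0 {S : Type*} [MeasurableSpace S] (μ : Measure S) [IsFiniteMeasure μ]
    {H : Type*} [NormedAddCommGroup H] [InnerProductSpace ℝ H]
    [TopologicalSpace.SeparableSpace H] [MeasurableSpace H] [BorelSpace H]
    (lam α : ℝ) (hlam : 0 < lam) (hα : α ∈ Set.Ioo (0 : ℝ) 1)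
    (f : S → ℝ → H → ℝ)
    (hf_meas : Measurable fun p : S × ℝ × H => f p.1 p.2.1 p.2.2)
    (hcont : ∀ᵐ s ∂μ, Continuous fun p : ℝ × H => f s p.1 p.2)
    (hgrowth : ∀ᵐ s ∂μ, ∀ (y : ℝ) (z : H), |f s y z| ≤ lam * (1 + |y| ^ α + ‖z‖ ^ α))
    (hlip : ∀ M : ℕ, ∃ L : ℝ, 0 < L ∧
      ∀ᵐ s ∂μ, ∀ (y y' : ℝ) (z z' : H), |y| ≤ M → |y'| ≤ M → ‖z‖ ≤ M → ‖z'‖ ≤ M →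
        |f s y z - f s y' z'| ≤ L * (|y - y'| + ‖z - z'‖)) :
    ∃ fn : ℕ → S → ℝ → H → ℝ,
      (∀ n, Measurable fun p : S × ℝ × H => fn n p.1 p.2.1 p.2.2) ∧
      (∀ n, ∃ K : ℝ, ∀ᵐ s ∂μ, ∀ (y y' : ℝ) (z z' : H),
        |fn n s y z - fn n s y' z'| ≤ K * (|y - y'| + ‖z - z'‖)) ∧
      (∀ᵐ s ∂μ, ∀ (y : ℝ) (z : H),
        (⨆ n, |fn n s y z|) ≤ |f s y z| ∧
        |f s y z| ≤ lam * (1 + |y| ^ α + ‖z‖ ^ α)) ∧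
      (∀ M : ℝ, 0 < M →
        Tendsto
          (fun n =>
            (∫ s, (⨆ (y : ℝ) (_ : |y| ≤ M) (z : H) (_ : ‖z‖ ≤ M),
              |fn n s y z - f s y z|) ^ 2 ∂μ) ^ (1 / 2 : ℝ))
          atTop (nhds 0)) := by
  classical
  -- the cutoff function
  set ρ : ℕ → ℝ → H → ℝ := fun n y z => min 1 (max 0 ((n : ℝ) + 1 - max |y| ‖z‖)) with hρdef
  have hρ0 : ∀ n y z, 0 ≤ ρ n y z := fun n y z =>
    le_min zero_le_one (le_max_left _ _)
  have hρ1 : ∀ n y z, ρ n y z ≤ 1 := fun n y z => min_le_left _ _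
  -- 1-Lipschitz property of the cutoff (w.r.t. the sum distance)
  have hρlip : ∀ n (y y' : ℝ) (z z' : H),
      |ρ n y z - ρ n y' z'| ≤ |y - y'| + ‖z - z'‖ := by
    intro n y y' z z'
    have h1 : |ρ n y z - ρ n y' z'| ≤
        |max 0 ((n : ℝ) + 1 - max |y| ‖z‖) - max 0 ((n : ℝ) + 1 - max |y'| ‖z'‖)| := by
      have := abs_min_sub_min_le_max (1 : ℝ) (max 0 ((n : ℝ) + 1 - max |y| ‖z‖))
        (1 : ℝ) (max 0 ((n : ℝ) + 1 - max |y'| ‖z'‖))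
      simpa using this
    have h2 : |max 0 ((n : ℝ) + 1 - max |y| ‖z‖) - max 0 ((n : ℝ) + 1 - max |y'| ‖z'‖)| ≤
        |max |y| ‖z‖ - max |y'| ‖z'‖| := by
      have h := abs_max_sub_max_le_max (0 : ℝ) ((n : ℝ) + 1 - max |y| ‖z‖)
        (0 : ℝ) ((n : ℝ) + 1 - max |y'| ‖z'‖)
      have e : ((n : ℝ) + 1 - max |y| ‖z‖) - ((n : ℝ) + 1 - max |y'| ‖z'‖)
          = -(max |y| ‖z‖ - max |y'| ‖z'‖) := by ring
      rw [sub_self, abs_zero, e, abs_neg] at h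
      exact h.trans (le_of_eq (max_eq_right (abs_nonneg _)))
    have h3 : |max |y| ‖z‖ - max |y'| ‖z'‖| ≤ max |(|y| - |y'|)| |(‖z‖ - ‖z'‖)| :=
      abs_max_sub_max_le_max _ _ _ _
    have h4 : |(|y| - |y'|)| ≤ |y - y'| := abs_abs_sub_abs_le_abs_sub _ _
    have h5 : |(‖z‖ - ‖z'‖)| ≤ ‖z - z'‖ := abs_norm_sub_norm_le _ _
    have h6 : max |(|y| - |y'|)| |(‖z‖ - ‖z'‖)| ≤ |y - y'| + ‖z - z'‖ :=
      max_le (h4.trans (le_add_of_nonneg_right (norm_nonneg _)))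
        (h5.trans (le_add_of_nonneg_left (abs_nonneg _)))
    exact h1.trans (h2.trans (h3.trans h6))
  -- cutoff vanishes outside the big ball
  have hρzero : ∀ (n : ℕ) (y : ℝ) (z : H), (n : ℝ) + 1 < max |y| ‖z‖ → ρ n y z = 0 := by
    intro n y z h
    have : max 0 ((n : ℝ) + 1 - max |y| ‖z‖) = 0 := max_eq_left (by linarith)
    simp [hρdef, this]
  -- cutoff is 1 on the ball of radius n
  have hρone : ∀ (n : ℕ) (y : ℝ) (z : H), max |y| ‖z‖ ≤ (n : ℝ) → ρ n y z = 1 := by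
    intro n y z h
    have : (1 : ℝ) ≤ max 0 ((n : ℝ) + 1 - max |y| ‖z‖) :=
      le_max_of_le_right (by linarith)
    simp [hρdef, min_eq_left this]
  refine ⟨fun n s y z => ρ n y z * f s y z, ?_, ?_, ?_, ?_⟩
  · -- measurability
    intro n
    have hc : Continuous fun q : ℝ × H => ρ n q.1 q.2 := by
      apply Continuous.min continuous_const
      apply Continuous.max continuous_const
      exact continuous_const.sub
        ((continuous_abs.comp continuous_fst).max (continuous_norm.comp continuous_snd))
    exact (hc.measurable.comp measurable_snd).mul hf_meas
  · -- uniform Lipschitz property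
    intro n
    obtain ⟨L, hL, hLae⟩ := hlip (n + 1)
    set B : ℝ := lam * (1 + ((n : ℝ) + 1) ^ α + ((n : ℝ) + 1) ^ α) with hBdef
    have hR : (0 : ℝ) < (n : ℝ) + 1 := by positivity
    have hB0 : 0 ≤ B := by
      have : (0 : ℝ) ≤ ((n : ℝ) + 1) ^ α := Real.rpow_nonneg hR.le _
      nlinarith
    refine ⟨L + B, ?_⟩
    filter_upwards [hLae, hgrowth] with s hs hg
    intro y y' z z'
    set d : ℝ := |y - y'| + ‖z - z'‖ with hddef
    have hd0 : 0 ≤ d := by positivity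
    -- a bound for f on the big ball
    have hB : ∀ (u : ℝ) (v : H), max |u| ‖v‖ ≤ (n : ℝ) + 1 → |f s u v| ≤ B := by
      intro u v huv
      have hu : |u| ≤ (n : ℝ) + 1 := (le_max_left _ _).trans huv
      have hv : ‖v‖ ≤ (n : ℝ) + 1 := (le_max_right _ _).trans huv
      have h1 : |u| ^ α ≤ ((n : ℝ) + 1) ^ α :=
        Real.rpow_le_rpow (abs_nonneg _) hu hα.1.le
      have h2 : ‖v‖ ^ α ≤ ((n : ℝ) + 1) ^ α :=
        Real.rpow_le_rpow (norm_nonneg _) hv hα.1.le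
      calc |f s u v| ≤ lam * (1 + |u| ^ α + ‖v‖ ^ α) := hg u v
        _ ≤ B := by rw [hBdef]; nlinarith
    have hρd : |ρ n y z - ρ n y' z'| ≤ d := hρlip n y y' z z'
    rcases le_or_gt (max |y| ‖z‖) ((n : ℝ) + 1) with h1 | h1 <;>
      rcases le_or_gt (max |y'| ‖z'‖) ((n : ℝ) + 1) with h2 | h2
    · -- both inside: use local Lipschitz bound
      have hy : |y| ≤ ((n + 1 : ℕ) : ℝ) := by push_cast; exact (le_max_left _ _).trans h1
      have hz : ‖z‖ ≤ ((n + 1 : ℕ) : ℝ) := by push_cast; exact (le_max_right _ _).trans h1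
      have hy' : |y'| ≤ ((n + 1 : ℕ) : ℝ) := by push_cast; exact (le_max_left _ _).trans h2
      have hz' : ‖z'‖ ≤ ((n + 1 : ℕ) : ℝ) := by push_cast; exact (le_max_right _ _).trans h2
      have hff' : |f s y z - f s y' z'| ≤ L * d := hs y y' z z' hy hy' hz hz'
      have hf' : |f s y' z'| ≤ B := hB y' z' h2
      have e : ρ n y z * f s y z - ρ n y' z' * f s y' z'
          = ρ n y z * (f s y z - f s y' z') + (ρ n y z - ρ n y' z') * f s y' z' := by ring
      rw [e]
      calc |ρ n y z * (f s y z - f s y' z') + (ρ n y z - ρ n y' z') * f s y' z'|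
          ≤ |ρ n y z * (f s y z - f s y' z')| + |(ρ n y z - ρ n y' z') * f s y' z'| :=
            abs_add_le _ _
        _ = |ρ n y z| * |f s y z - f s y' z'| + |ρ n y z - ρ n y' z'| * |f s y' z'| := by
            rw [abs_mul, abs_mul]
        _ ≤ (L + B) * d := by
            have e1 : |ρ n y z| ≤ 1 := by
              rw [abs_of_nonneg (hρ0 n y z)]; exact hρ1 n y z
            nlinarith [mul_le_mul e1 hff' (abs_nonneg _) zero_le_one,
              mul_le_mul hρd hf' (abs_nonneg _) hd0, abs_nonneg (ρ n y z),
              mul_nonneg hL.le hd0]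
    · -- second point outside
      have hz0 : ρ n y' z' = 0 := hρzero n y' z' h2
      have hf1 : |f s y z| ≤ B := hB y z h1
      have hρle : ρ n y z ≤ d := by
        have := hρd; rw [hz0] at this
        rw [sub_zero, abs_of_nonneg (hρ0 n y z)] at this; exact this
      rw [hz0, zero_mul, sub_zero, abs_mul, abs_of_nonneg (hρ0 n y z)]
      nlinarith [mul_le_mul hρle hf1 (abs_nonneg _) hd0, mul_nonneg hL.le hd0]
    · -- first point outside
      have hz0 : ρ n y z = 0 := hρzero n y z h1
      have hf1 : |f s y' z'| ≤ B := hB y' z' h2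
      have hρle : ρ n y' z' ≤ d := by
        have := hρd; rw [hz0] at this
        rw [zero_sub, abs_neg, abs_of_nonneg (hρ0 n y' z')] at this; exact this
      rw [hz0, zero_mul, zero_sub, abs_neg, abs_mul, abs_of_nonneg (hρ0 n y' z')]
      nlinarith [mul_le_mul hρle hf1 (abs_nonneg _) hd0, mul_nonneg hL.le hd0]
    · -- both outside
      rw [hρzero n y z h1, hρzero n y' z' h2]
      simp only [zero_mul, sub_zero, abs_zero]
      positivity
  · -- domination
    filter_upwards [hgrowth] with s hg
    intro y z
    refine ⟨?_, hg y z⟩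
    apply ciSup_le
    intro n
    rw [abs_mul, abs_of_nonneg (hρ0 n y z)]
    exact mul_le_of_le_one_left (abs_nonneg _) (hρ1 n y z)
  · -- convergence of Φ_M
    intro M hM
    apply Tendsto.congr' (f₁ := fun _ => (0 : ℝ))
    · rw [EventuallyEq, eventually_atTop]
      refine ⟨⌈M⌉₊, fun n hn => ?_⟩
      have hMn : M ≤ (n : ℝ) := (Nat.le_ceil M).trans (Nat.cast_le.2 hn)
      have hsup : ∀ s : S, (⨆ (y : ℝ) (_ : |y| ≤ M) (z : H) (_ : ‖z‖ ≤ M),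
          |ρ n y z * f s y z - f s y z|) = 0 := by
        intro s
        apply le_antisymm
        · apply Real.iSup_nonpos
          intro y
          apply Real.iSup_nonpos
          intro hy
          apply Real.iSup_nonpos
          intro z
          apply Real.iSup_nonpos
          intro hz
          have : ρ n y z = 1 := hρone n y z (max_le (hy.trans hMn) (hz.trans hMn))
          rw [this, one_mul, sub_self, abs_zero]
        · apply Real.iSup_nonneg
          intro y
          apply Real.iSup_nonneg
          intro hy
          apply Real.iSup_nonneg
          intro z
          apply Real.iSup_nonneg
          intro hz
          exact abs_nonneg _
      simp only [hsup]
      rw [show ((0 : ℝ) ^ 2) = 0 by norm_num, integral_zero,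
        Real.zero_rpow (by norm_num : (1 / 2 : ℝ) ≠ 0)]
    · exact tendsto_const_nhds
end

section
/- Let $H$ be a real Hilbert space, $\lambda>0$ and $\alpha\in(0,1)$. Let $f\colon\mathbb{R}\times H\to\mathbb{R}$ be continuous, satisfy $|f(y,z)|\le\lambda(1+|y|^{\alpha}+\|z\|^{\alpha})$ for all $(y,z)$, and be Lipschitz on every ball: for each $M>0$ there is $L_M>0$ with $|f(y,z)-f(y',z')|\le L_M(|y-y'|+\|z-z'\|)$ whenever $|y|,|y'|\le M$ and $\|z\|,\|z'\|\le M$. Then there exists a sequence of functions $f_n\colon\mathbb{R}\times H\to\mathbb{R}$ such that: (i) each $f_n$ is globally Lipschitz; (ii) $|f_n(y,z)|\le |f(y,z)|$ for all $n$ and all $(y,z)$; (iii) for every $M>0$, $\sup_{|y|\le M,\;\|z\|\le M}|f_n(y,z)-f(y,z)|\to 0$ as $n\to\infty$. -/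
open Filter

section InfConv

variable {H : Type*} [NormedAddCommGroup H] [InnerProductSpace ℝ H]

/-- Inf-convolution (Pasch–Hausdorff regularization) of `g` with slope `c`. -/
noncomputable def infConv (g : ℝ → H → ℝ) (c : ℝ) (y : ℝ) (z : H) : ℝ :=
  ⨅ p : ℝ × H, (g p.1 p.2 + c * (|y - p.1| + ‖z - p.2‖))

lemma infConv_bddBelow (lam : ℝ) (hlamp : 0 ≤ lam) (g : ℝ → H → ℝ)
    (hg : ∀ p q, -(lam * (3 + |p| + ‖q‖)) ≤ g p q) (c : ℝ) (hc : lam + 1 ≤ c)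
    (y : ℝ) (z : H) :
    BddBelow (Set.range fun p : ℝ × H => g p.1 p.2 + c * (|y - p.1| + ‖z - p.2‖)) := by
  refine ⟨-(3 * lam) - (lam + 1) * (|y| + ‖z‖), ?_⟩
  rintro _ ⟨⟨p, q⟩, rfl⟩
  have h1 := hg p q
  have h2 : |p| - |y| ≤ |y - p| := by
    rw [abs_sub_comm]; exact (abs_sub_abs_le_abs_sub p y)
  have h3 : ‖q‖ - ‖z‖ ≤ ‖z - q‖ := by
    rw [norm_sub_rev]; exact (norm_sub_norm_le q z)
  have h4 : (0:ℝ) ≤ |y - p| + ‖z - q‖ := by positivity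
  have h5 : (lam + 1) * (|y - p| + ‖z - q‖) ≤ c * (|y - p| + ‖z - q‖) :=
    mul_le_mul_of_nonneg_right hc h4
  have h6 : (lam + 1) * ((|p| - |y|) + (‖q‖ - ‖z‖)) ≤ (lam + 1) * (|y - p| + ‖z - q‖) :=
    mul_le_mul_of_nonneg_left (add_le_add h2 h3) (by linarith)
  simp only []
  nlinarith [abs_nonneg p, norm_nonneg q]

lemma infConv_le (lam : ℝ) (hlamp : 0 ≤ lam) (g : ℝ → H → ℝ)
    (hg : ∀ p q, -(lam * (3 + |p| + ‖q‖)) ≤ g p q) (c : ℝ) (hc : lam + 1 ≤ c)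
    (y : ℝ) (z : H) : infConv g c y z ≤ g y z := by
  have := ciInf_le (infConv_bddBelow lam hlamp g hg c hc y z) (y, z)
  simpa [infConv] using this

lemma infConv_lip_one_sided (lam : ℝ) (hlamp : 0 ≤ lam) (g : ℝ → H → ℝ)
    (hg : ∀ p q, -(lam * (3 + |p| + ‖q‖)) ≤ g p q) (c : ℝ) (hc : lam + 1 ≤ c)
    (y y' : ℝ) (z z' : H) :
    infConv g c y z ≤ infConv g c y' z' + c * (|y - y'| + ‖z - z'‖) := by
  have hc0 : (0:ℝ) ≤ c := by linarith
  rw [← sub_le_iff_le_add]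
  refine le_ciInf fun p => ?_
  rw [sub_le_iff_le_add]
  have step : infConv g c y z ≤ g p.1 p.2 + c * (|y - p.1| + ‖z - p.2‖) :=
    ciInf_le (infConv_bddBelow lam hlamp g hg c hc y z) p
  refine step.trans ?_
  have t1 : |y - p.1| ≤ |y - y'| + |y' - p.1| := abs_sub_le y y' p.1
  have t2 : ‖z - p.2‖ ≤ ‖z - z'‖ + ‖z' - p.2‖ := norm_sub_le_norm_sub_add_norm_sub z z' p.2
  nlinarith [mul_le_mul_of_nonneg_left (add_le_add t1 t2) hc0]

lemma infConv_abs_lip (lam : ℝ) (hlamp : 0 ≤ lam) (g : ℝ → H → ℝ)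
    (hg : ∀ p q, -(lam * (3 + |p| + ‖q‖)) ≤ g p q) (c : ℝ) (hc : lam + 1 ≤ c)
    (y y' : ℝ) (z z' : H) :
    |infConv g c y z - infConv g c y' z'| ≤ c * (|y - y'| + ‖z - z'‖) := by
  rw [abs_sub_le_iff]
  constructor
  · have := infConv_lip_one_sided lam hlamp g hg c hc y y' z z'
    linarith
  · have := infConv_lip_one_sided lam hlamp g hg c hc y' y z' z
    rw [abs_sub_comm y' y, norm_sub_rev z' z] at this
    linarith

lemma infConv_eq_on_ball (lam : ℝ) (hlam : 0 < lam) (g : ℝ → H → ℝ)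
    (hg : ∀ p q, |g p q| ≤ lam * (3 + |p| + ‖q‖))
    (hlip : ∀ M : ℝ, 0 < M → ∃ L : ℝ, 0 < L ∧
      ∀ (y y' : ℝ) (z z' : H), |y| ≤ M → |y'| ≤ M → ‖z‖ ≤ M → ‖z'‖ ≤ M →
        |g y z - g y' z'| ≤ L * (|y - y'| + ‖z - z'‖))
    (M : ℝ) (hM : 0 < M) :
    ∃ C : ℝ, lam + 1 ≤ C ∧ ∀ c : ℝ, C ≤ c → ∀ y z, |y| ≤ M → ‖z‖ ≤ M →
      infConv g c y z = g y z := by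
  have hg' : ∀ p q, -(lam * (3 + |p| + ‖q‖)) ≤ g p q := fun p q =>
    (neg_le_of_abs_le (hg p q))
  obtain ⟨L, hL, hLip⟩ := hlip (M + 1) (by linarith)
  refine ⟨lam + 1 + L + lam * (6 + 4 * M) + 2 * lam, by nlinarith [mul_pos hlam hM], ?_⟩
  intro c hc y z hy hz
  have hc1 : lam + 1 ≤ c := by nlinarith
  refine le_antisymm (infConv_le lam hlam.le g hg' c hc1 y z) ?_
  refine le_ciInf fun p => ?_
  set d : ℝ := |y - p.1| + ‖z - p.2‖ with hd
  have hd0 : 0 ≤ d := by positivity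
  have hp1 : |p.1| ≤ M + d := by
    have : |p.1| - |y| ≤ |y - p.1| := by
      rw [abs_sub_comm]; exact abs_sub_abs_le_abs_sub p.1 y
    have : |p.1| ≤ |y| + |y - p.1| := by linarith
    have hle : |y - p.1| ≤ d := by
      rw [hd]; exact le_add_of_nonneg_right (norm_nonneg _)
    linarith
  have hp2 : ‖p.2‖ ≤ M + d := by
    have h1 : ‖p.2‖ - ‖z‖ ≤ ‖z - p.2‖ := by
      rw [norm_sub_rev]; exact norm_sub_norm_le p.2 z
    have hle : ‖z - p.2‖ ≤ d := by
      rw [hd]; exact le_add_of_nonneg_left (abs_nonneg _)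
    linarith
  by_cases hcase : d ≤ 1
  · -- local Lipschitz regime
    have hy' : |p.1| ≤ M + 1 := by linarith
    have hz' : ‖p.2‖ ≤ M + 1 := by linarith
    have := hLip y p.1 z p.2 (by linarith) hy' (by linarith) hz'
    have hsub : g y z - g p.1 p.2 ≤ L * d := by
      have := (abs_le.mp this).2
      simpa [hd] using this
    have hLd : L * d ≤ c * d := by
      apply mul_le_mul_of_nonneg_right _ hd0
      nlinarith
    linarith
  · -- far regime, use growth
    push_neg at hcase
    have hlow : -(lam * (3 + (M + d) + (M + d))) ≤ g p.1 p.2 := by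
      have := hg' p.1 p.2
      nlinarith [hlam.le]
    have hup : g y z ≤ lam * (3 + M + M) := by
      have h1 := (abs_le.mp (hg y z)).2
      nlinarith [hlam.le, abs_nonneg y, norm_nonneg z]
    have hc2 : 2 * lam ≤ c := by nlinarith [mul_pos hlam hM]
    have key : lam * (3 + M + M) ≤ -(lam * (3 + (M + d) + (M + d))) + c * d := by
      nlinarith [mul_nonneg (by linarith : (0:ℝ) ≤ c - 2 * lam)
        (by linarith : (0:ℝ) ≤ d - 1), mul_pos hlam hM]
    linarith

end InfConv

/-- Pointwise core of the approximation lemma: a continuous, locally Lipschitz function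
`f : ℝ × H → ℝ` with sublinear growth `|f(y,z)| ≤ λ(1+|y|^α+‖z‖^α)`, `α ∈ (0,1)`, can be
approximated uniformly on balls by globally Lipschitz functions dominated by `|f|`. -/
theorem stmt_1 {H : Type*} [NormedAddCommGroup H] [InnerProductSpace ℝ H]
    (lam α : ℝ) (hlam : 0 < lam) (hα : α ∈ Set.Ioo (0 : ℝ) 1)
    (f : ℝ → H → ℝ)
    (hcont : Continuous fun p : ℝ × H => f p.1 p.2)
    (hgrowth : ∀ (y : ℝ) (z : H), |f y z| ≤ lam * (1 + |y| ^ α + ‖z‖ ^ α))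
    (hlip : ∀ M : ℝ, 0 < M → ∃ L : ℝ, 0 < L ∧
      ∀ (y y' : ℝ) (z z' : H), |y| ≤ M → |y'| ≤ M → ‖z‖ ≤ M → ‖z'‖ ≤ M →
        |f y z - f y' z'| ≤ L * (|y - y'| + ‖z - z'‖)) :
    ∃ fn : ℕ → ℝ → H → ℝ,
      (∀ n, ∃ K : ℝ, ∀ (y y' : ℝ) (z z' : H),
        |fn n y z - fn n y' z'| ≤ K * (|y - y'| + ‖z - z'‖)) ∧
      (∀ n (y : ℝ) (z : H), |fn n y z| ≤ |f y z|) ∧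
      (∀ M : ℝ, 0 < M →
        Tendsto
          (fun n => ⨆ (y : ℝ) (_ : |y| ≤ M) (z : H) (_ : ‖z‖ ≤ M), |fn n y z - f y z|)
          atTop (nhds 0)) := by
  obtain ⟨hα0, hα1⟩ := hα
  -- linear growth bound
  have hgrow' : ∀ (y : ℝ) (z : H), |f y z| ≤ lam * (3 + |y| + ‖z‖) := by
    intro y z
    have h1 : |y| ^ α ≤ 1 + |y| := by
      rcases le_total |y| 1 with h | h
      · have := Real.rpow_le_one (abs_nonneg y) h hα0.le
        linarith [abs_nonneg y]
      · have := Real.rpow_le_rpow_of_exponent_le h hα1.le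
        rw [Real.rpow_one] at this
        linarith
    have h2 : ‖z‖ ^ α ≤ 1 + ‖z‖ := by
      rcases le_total ‖z‖ 1 with h | h
      · have := Real.rpow_le_one (norm_nonneg z) h hα0.le
        linarith [norm_nonneg z]
      · have := Real.rpow_le_rpow_of_exponent_le h hα1.le
        rw [Real.rpow_one] at this
        linarith
    have := hgrowth y z
    nlinarith [hlam.le]
  have hgrowN : ∀ (y : ℝ) (z : H), |(-f y z)| ≤ lam * (3 + |y| + ‖z‖) := by
    intro y z; rw [abs_neg]; exact hgrow' y z
  have hlow : ∀ (p : ℝ) (q : H), -(lam * (3 + |p| + ‖q‖)) ≤ f p q := fun p q =>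
    neg_le_of_abs_le (hgrow' p q)
  have hlowN : ∀ (p : ℝ) (q : H), -(lam * (3 + |p| + ‖q‖)) ≤ -f p q := fun p q =>
    neg_le_of_abs_le (hgrowN p q)
  have hlipN : ∀ M : ℝ, 0 < M → ∃ L : ℝ, 0 < L ∧
      ∀ (y y' : ℝ) (z z' : H), |y| ≤ M → |y'| ≤ M → ‖z‖ ≤ M → ‖z'‖ ≤ M →
        |(-f y z) - (-f y' z')| ≤ L * (|y - y'| + ‖z - z'‖) := by
    intro M hM
    obtain ⟨L, hL, h⟩ := hlip M hM
    exact ⟨L, hL, fun y y' z z' h1 h2 h3 h4 => by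
      rw [show -f y z - -f y' z' = -(f y z - f y' z') by ring, abs_neg]
      exact h y y' z z' h1 h2 h3 h4⟩
  set c : ℕ → ℝ := fun n => lam + 1 + n with hcdef
  have hc : ∀ n, lam + 1 ≤ c n := fun n => by
    simp [hcdef]
  set G : ℕ → ℝ → H → ℝ := fun n => infConv f (c n) with hGdef
  set Gm : ℕ → ℝ → H → ℝ := fun n => infConv (fun p q => -f p q) (c n) with hGmdef
  refine ⟨fun n y z => max (G n y z) 0 - max (Gm n y z) 0, ?_, ?_, ?_⟩
  · -- Lipschitz
    intro n
    refine ⟨2 * c n, fun y y' z z' => ?_⟩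
    have h1 : |max (G n y z) 0 - max (G n y' z') 0| ≤ c n * (|y - y'| + ‖z - z'‖) :=
      (abs_max_sub_max_le_abs _ _ _).trans
        (infConv_abs_lip lam hlam.le f hlow (c n) (hc n) y y' z z')
    have h2 : |max (Gm n y z) 0 - max (Gm n y' z') 0| ≤ c n * (|y - y'| + ‖z - z'‖) :=
      (abs_max_sub_max_le_abs _ _ _).trans
        (infConv_abs_lip lam hlam.le (fun p q => -f p q) hlowN (c n) (hc n) y y' z z')
    calc |max (G n y z) 0 - max (Gm n y z) 0 - (max (G n y' z') 0 - max (Gm n y' z') 0)|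
        ≤ |max (G n y z) 0 - max (G n y' z') 0| + |max (Gm n y z) 0 - max (Gm n y' z') 0| := by
          rw [show max (G n y z) 0 - max (Gm n y z) 0 - (max (G n y' z') 0 - max (Gm n y' z') 0)
            = (max (G n y z) 0 - max (G n y' z') 0) - (max (Gm n y z) 0 - max (Gm n y' z') 0) by ring]
          exact abs_sub _ _
      _ ≤ 2 * c n * (|y - y'| + ‖z - z'‖) := by linarith
  · -- domination
    intro n y z
    have hGle : G n y z ≤ f y z := infConv_le lam hlam.le f hlow (c n) (hc n) y z
    have hGmle : Gm n y z ≤ -f y z :=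
      infConv_le lam hlam.le (fun p q => -f p q) hlowN (c n) (hc n) y z
    show |max (G n y z) 0 - max (Gm n y z) 0| ≤ |f y z|
    rcases le_total 0 (f y z) with hf | hf
    · have h1 : max (Gm n y z) 0 = 0 := max_eq_right (by linarith)
      rw [h1, sub_zero]
      rw [abs_of_nonneg (le_max_right _ _), abs_of_nonneg hf]
      exact max_le (hGle) hf
    · have h1 : max (G n y z) 0 = 0 := max_eq_right (by linarith)
      rw [h1, zero_sub, abs_neg]
      rw [abs_of_nonneg (le_max_right _ _), abs_of_nonpos hf]
      exact max_le (by linarith) (by linarith)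
  · -- convergence
    intro M hM
    obtain ⟨C1, hC1l, hC1⟩ := infConv_eq_on_ball lam hlam f hgrow' hlip M hM
    obtain ⟨C2, hC2l, hC2⟩ :=
      infConv_eq_on_ball lam hlam (fun p q => -f p q) hgrowN hlipN M hM
    obtain ⟨N, hN⟩ := exists_nat_ge (max C1 C2)
    apply tendsto_atTop_of_eventually_const (i₀ := N)
    intro n hn
    have hcn1 : C1 ≤ c n := by
      have : (N : ℝ) ≤ (n : ℝ) := Nat.cast_le.mpr hn
      have := le_trans (le_max_left C1 C2) hN
      simp only [hcdef]
      linarith [hlam.le]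
    have hcn2 : C2 ≤ c n := by
      have : (N : ℝ) ≤ (n : ℝ) := Nat.cast_le.mpr hn
      have := le_trans (le_max_right C1 C2) hN
      simp only [hcdef]
      linarith [hlam.le]
    have hzero : ∀ y z, |y| ≤ M → ‖z‖ ≤ M →
        |max (G n y z) 0 - max (Gm n y z) 0 - f y z| = 0 := by
      intro y z hy hz
      have e1 : G n y z = f y z := hC1 (c n) hcn1 y z hy hz
      have e2 : Gm n y z = -f y z := hC2 (c n) hcn2 y z hy hz
      rw [e1, e2, max_zero_sub_eq_self, sub_self, abs_zero]
    have hF : ∀ y : ℝ, (⨆ (_ : |y| ≤ M), ⨆ (z : H), ⨆ (_ : ‖z‖ ≤ M),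
        |max (G n y z) 0 - max (Gm n y z) 0 - f y z|) = 0 := by
      intro y
      by_cases hy : |y| ≤ M
      · have hGz : ∀ z : H, (⨆ (_ : ‖z‖ ≤ M),
            |max (G n y z) 0 - max (Gm n y z) 0 - f y z|) = 0 := by
          intro z
          by_cases hz : ‖z‖ ≤ M
          · haveI : Nonempty (‖z‖ ≤ M) := ⟨hz⟩
            rw [ciSup_const]
            exact hzero y z hy hz
          · haveI : IsEmpty (‖z‖ ≤ M) := ⟨fun h => hz h⟩
            exact Real.iSup_of_isEmpty _
        haveI : Nonempty (|y| ≤ M) := ⟨hy⟩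
        rw [ciSup_const]
        simp only [hGz]
        exact ciSup_const
      · haveI : IsEmpty (|y| ≤ M) := ⟨fun h => hy h⟩
        exact Real.iSup_of_isEmpty _
    simp only [hF]
    exact ciSup_const
end

section
/- Let $t\le T$, $A\ge 0$, $\lambda\ge 0$, let $u\colon[t,T]\to[0,\infty)$ be bounded measurable and $w\colon[t,T]\to[0,\infty)$ integrable, and suppose that for every $s\in[t,T]$: $u(s)+\int_s^{T}w(r)\,dr\le A+2\lambda\int_s^{T}\big(3\sqrt{u(r)}+u(r)+\sqrt{u(r)\,w(r)}\big)\,dr$. Then, with $C_1:=\big(A+9(T-t)\big)\exp\big((1+4\lambda^{2})(T-t)\big)$, one has $u(s)\le C_1$ for every $s\in[t,T]$, and $\int_t^{T}w(r)\,dr\le 2\big(A+9(T-t)\big)+2(1+4\lambda^{2})(T-t)\,C_1$. -/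
open MeasureTheory

set_option maxHeartbeats 1000000

/-- Deterministic core of the a priori estimate for BSDEs with sublinearly growing
generator: if `u` is bounded measurable, `w` is integrable, both nonnegative, and
`u(s) + ∫_s^T w ≤ A + 2λ ∫_s^T (3√u + u + √(u w))` for all `s ∈ [t,T]`, then with
`C₁ = (A + 9(T-t)) exp((1+4λ²)(T-t))` one has `u ≤ C₁` on `[t,T]` and
`∫_t^T w ≤ 2(A + 9(T-t)) + 2(1+4λ²)(T-t) C₁`. -/
theorem stmt_10 (t T A lam : ℝ) (htT : t ≤ T) (hA : 0 ≤ A) (hlam : 0 ≤ lam)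
    (u w : ℝ → ℝ) (hu_meas : Measurable u) (hw_meas : Measurable w)
    (hu_nonneg : ∀ s ∈ Set.Icc t T, 0 ≤ u s)
    (hw_nonneg : ∀ s ∈ Set.Icc t T, 0 ≤ w s)
    (hu_bdd : ∃ K : ℝ, ∀ s ∈ Set.Icc t T, u s ≤ K)
    (hw_int : MeasureTheory.IntegrableOn w (Set.Icc t T))
    (hineq : ∀ s ∈ Set.Icc t T,
      u s + ∫ r in s..T, w r ≤
        A + 2 * lam * ∫ r in s..T,
          (3 * Real.sqrt (u r) + u r + Real.sqrt (u r * w r))) :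
    (∀ s ∈ Set.Icc t T,
        u s ≤ (A + 9 * (T - t)) * Real.exp ((1 + 4 * lam ^ 2) * (T - t))) ∧
    (∫ r in t..T, w r) ≤ 2 * (A + 9 * (T - t)) +
        2 * (1 + 4 * lam ^ 2) * (T - t) *
          ((A + 9 * (T - t)) * Real.exp ((1 + 4 * lam ^ 2) * (T - t))) := by
  obtain ⟨K, hK⟩ := hu_bdd
  set c : ℝ := 1 + 4 * lam ^ 2 with hc
  set B : ℝ := A + 9 * (T - t) with hB
  have hc1 : (1:ℝ) ≤ c := by rw [hc]; nlinarith [sq_nonneg lam]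
  have hc0 : (0:ℝ) ≤ c := by linarith
  have hB0 : (0:ℝ) ≤ B := by rw [hB]; nlinarith
  set K' : ℝ := max K 0 with hK'
  have hK'0 : (0:ℝ) ≤ K' := le_max_right _ _
  have huK'' : ∀ s ∈ Set.Icc t T, u s ≤ K' := fun s hs => (hK s hs).trans (le_max_left _ _)
  clear_value c B K'
  have huK' : ∀ s ∈ Set.Icc t T, u s ≤ K' := huK''
  -- u is integrable on [t,T]
  have hu_int : MeasureTheory.IntegrableOn u (Set.Icc t T) := by
    have hconst : MeasureTheory.IntegrableOn (fun _ : ℝ => K') (Set.Icc t T) :=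
      integrableOn_const measure_Icc_lt_top.ne
    refine hconst.mono' hu_meas.aestronglyMeasurable ?_
    filter_upwards [ae_restrict_mem measurableSet_Icc] with x hx
    rw [Real.norm_eq_abs, abs_of_nonneg (hu_nonneg x hx)]
    exact huK' x hx
  -- the generator-growth integrand is integrable on [t,T]
  have hg_meas : Measurable (fun r => 3 * Real.sqrt (u r) + u r + Real.sqrt (u r * w r)) := by
    fun_prop
  have hg_int : MeasureTheory.IntegrableOn
      (fun r => 3 * Real.sqrt (u r) + u r + Real.sqrt (u r * w r)) (Set.Icc t T) := by
    have hconst : MeasureTheory.IntegrableOn (fun _ : ℝ => 3 + (9/2) * K') (Set.Icc t T) :=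
      integrableOn_const measure_Icc_lt_top.ne
    refine (hconst.add (hw_int.div_const 2)).mono' hg_meas.aestronglyMeasurable ?_
    filter_upwards [ae_restrict_mem measurableSet_Icc] with x hx
    have h1 : 0 ≤ u x := hu_nonneg x hx
    have h2 : 0 ≤ w x := hw_nonneg x hx
    have h3 : u x ≤ K' := huK' x hx
    have e1 : Real.sqrt (u x) ^ 2 = u x := Real.sq_sqrt h1
    have e2 : Real.sqrt (w x) ^ 2 = w x := Real.sq_sqrt h2
    have e3 : Real.sqrt (u x * w x) = Real.sqrt (u x) * Real.sqrt (w x) := Real.sqrt_mul h1 _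
    simp only [Pi.add_apply]
    rw [Real.norm_eq_abs, abs_of_nonneg (by positivity), e3]
    nlinarith [sq_nonneg (Real.sqrt (u x) - 1), sq_nonneg (Real.sqrt (u x) - Real.sqrt (w x)),
      Real.sqrt_nonneg (u x), Real.sqrt_nonneg (w x)]
  -- interval integrability helper
  have hII : ∀ {f : ℝ → ℝ}, MeasureTheory.IntegrableOn f (Set.Icc t T) →
      ∀ s ∈ Set.Icc t T, IntervalIntegrable f volume s T := by
    intro f hf s hs
    exact MeasureTheory.IntegrableOn.intervalIntegrable
      (by rw [Set.uIcc_of_le hs.2]; exact hf.mono_set (Set.Icc_subset_Icc hs.1 le_rfl))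
  -- the key linearized inequality
  have key : ∀ s ∈ Set.Icc t T,
      u s + (∫ r in s..T, w r) / 2 ≤ B + c * ∫ r in s..T, u r := by
    intro s hs
    have hsT := hs.2
    have hwI := hII hw_int s hs
    have huI := hII hu_int s hs
    have hgI := hII hg_int s hs
    have hpt : ∀ r ∈ Set.Icc s T,
        2 * lam * (3 * Real.sqrt (u r) + u r + Real.sqrt (u r * w r))
          ≤ 9 + c * u r + w r / 2 := by
      intro r hr
      have hr' : r ∈ Set.Icc t T := ⟨hs.1.trans hr.1, hr.2⟩
      have h1 := hu_nonneg r hr'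
      have h2 := hw_nonneg r hr'
      have e1 : Real.sqrt (u r) ^ 2 = u r := Real.sq_sqrt h1
      have e2 : Real.sqrt (w r) ^ 2 = w r := Real.sq_sqrt h2
      have e3 : Real.sqrt (u r * w r) = Real.sqrt (u r) * Real.sqrt (w r) := Real.sqrt_mul h1 _
      rw [e3, hc]
      nlinarith [sq_nonneg (lam * Real.sqrt (u r) - 3),
        sq_nonneg (2 * lam * Real.sqrt (u r) - Real.sqrt (w r)),
        mul_nonneg (sq_nonneg (1 - lam)) (sq_nonneg (Real.sqrt (u r)))]
    have hRI : IntervalIntegrable (fun r => 9 + c * u r + w r / 2) volume s T :=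
      (intervalIntegrable_const.add (huI.const_mul c)).add (hwI.div_const 2)
    have hmono : (∫ r in s..T, 2 * lam * (3 * Real.sqrt (u r) + u r + Real.sqrt (u r * w r)))
        ≤ ∫ r in s..T, (9 + c * u r + w r / 2) :=
      intervalIntegral.integral_mono_on hsT (hgI.const_mul _) hRI hpt
    have hsplit : (∫ r in s..T, (9 + c * u r + w r / 2))
        = 9 * (T - s) + c * (∫ r in s..T, u r) + (∫ r in s..T, w r) / 2 := by
      rw [intervalIntegral.integral_add (intervalIntegrable_const.add (huI.const_mul c))
          (hwI.div_const 2),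
        intervalIntegral.integral_add intervalIntegrable_const (huI.const_mul c),
        intervalIntegral.integral_const, intervalIntegral.integral_const_mul,
        intervalIntegral.integral_div]
      simp [smul_eq_mul]; ring
    have hlhs : (∫ r in s..T, 2 * lam * (3 * Real.sqrt (u r) + u r + Real.sqrt (u r * w r)))
        = 2 * lam * ∫ r in s..T, (3 * Real.sqrt (u r) + u r + Real.sqrt (u r * w r)) :=
      intervalIntegral.integral_const_mul _ _
    have h0 := hineq s hs
    have h9 : 9 * (T - s) ≤ 9 * (T - t) := by linarith [hs.1]
    rw [hlhs, hsplit] at hmono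
    rw [hB]
    linarith
  have key1 : ∀ s ∈ Set.Icc t T, u s ≤ B + c * ∫ r in s..T, u r := by
    intro s hs
    have hw0 : 0 ≤ ∫ r in s..T, w r :=
      intervalIntegral.integral_nonneg hs.2 (fun r hr => hw_nonneg r ⟨hs.1.trans hr.1, hr.2⟩)
    linarith [key s hs]
  -- ∫_s^T (T-r)^k
  have ipow : ∀ (s : ℝ) (k : ℕ),
      (∫ r in s..T, (T - r) ^ k) = (T - s) ^ (k+1) / ((k : ℝ) + 1) := by
    intro s k
    have h := intervalIntegral.integral_comp_sub_left (a := s) (b := T) (fun x : ℝ => x ^ k) T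
    simp only [sub_self] at h
    rw [h, integral_pow]
    simp
  have hfac : ∀ k : ℕ, (((k+1).factorial : ℝ)) = ((k : ℝ) + 1) * (k.factorial : ℝ) := by
    intro k; rw [Nat.factorial_succ]; push_cast; ring
  have hterm : ∀ (D : ℝ) (k : ℕ) (x : ℝ),
      c * (D * c ^ k / (k.factorial : ℝ) * (x ^ (k+1) / ((k : ℝ) + 1)))
        = D * c ^ (k+1) / (((k+1).factorial : ℝ)) * x ^ (k+1) := by
    intro D k x
    have h1 : ((k.factorial : ℝ)) ≠ 0 := Nat.cast_ne_zero.2 k.factorial_ne_zero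
    have h2 : ((k : ℝ) + 1) ≠ 0 := by positivity
    rw [hfac]; field_simp; ring
  -- the iterated bound
  have main : ∀ n : ℕ, ∀ s ∈ Set.Icc t T,
      u s ≤ (∑ k ∈ Finset.range n, B * c ^ k / (k.factorial : ℝ) * (T - s) ^ k)
        + K' * c ^ n / (n.factorial : ℝ) * (T - s) ^ n := by
    intro n
    induction n with
    | zero => intro s hs; simpa using huK' s hs
    | succ n ih =>
      intro s hs
      have hsT := hs.2
      have hki : ∀ (D : ℝ) (k : ℕ),
          IntervalIntegrable (fun r => D * c ^ k / (k.factorial : ℝ) * (T - r) ^ k)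
            volume s T := by
        intro D k
        have hcont : Continuous fun r : ℝ => D * c ^ k / (k.factorial : ℝ) * (T - r) ^ k := by
          fun_prop
        exact hcont.intervalIntegrable s T
      have hsum_int : IntervalIntegrable
          (fun r => ∑ k ∈ Finset.range n, B * c ^ k / (k.factorial : ℝ) * (T - r) ^ k)
            volume s T := by
        have h := IntervalIntegrable.sum (Finset.range n)
          (f := fun (k : ℕ) (r : ℝ) => B * c ^ k / (k.factorial : ℝ) * (T - r) ^ k)
          (fun k _ => hki B k)
        simpa [Finset.sum_fn] using h
      have hpoly : IntervalIntegrable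
          (fun r => (∑ k ∈ Finset.range n, B * c ^ k / (k.factorial : ℝ) * (T - r) ^ k)
            + K' * c ^ n / (n.factorial : ℝ) * (T - r) ^ n) volume s T :=
        hsum_int.add (hki K' n)
      have hmono2 : (∫ r in s..T, u r)
          ≤ ∫ r in s..T, ((∑ k ∈ Finset.range n, B * c ^ k / (k.factorial : ℝ) * (T - r) ^ k)
            + K' * c ^ n / (n.factorial : ℝ) * (T - r) ^ n) :=
        intervalIntegral.integral_mono_on hsT (hII hu_int s hs) hpoly
          (fun r hr => ih r ⟨hs.1.trans hr.1, hr.2⟩)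
      have hcomp : (∫ r in s..T,
            ((∑ k ∈ Finset.range n, B * c ^ k / (k.factorial : ℝ) * (T - r) ^ k)
              + K' * c ^ n / (n.factorial : ℝ) * (T - r) ^ n))
          = (∑ k ∈ Finset.range n,
              B * c ^ k / (k.factorial : ℝ) * ((T - s) ^ (k+1) / ((k : ℝ) + 1)))
            + K' * c ^ n / (n.factorial : ℝ) * ((T - s) ^ (n+1) / ((n : ℝ) + 1)) := by
        rw [intervalIntegral.integral_add hsum_int (hki K' n),
          intervalIntegral.integral_finset_sum
            (f := fun (k : ℕ) (r : ℝ) => B * c ^ k / (k.factorial : ℝ) * (T - r) ^ k)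
            (fun k _ => hki B k),
          intervalIntegral.integral_const_mul, ipow s n]
        congr 1
        refine Finset.sum_congr rfl fun k _ => ?_
        rw [intervalIntegral.integral_const_mul, ipow s k]
      have hle := key1 s hs
      have hstep : u s ≤ B + c * ((∑ k ∈ Finset.range n,
            B * c ^ k / (k.factorial : ℝ) * ((T - s) ^ (k+1) / ((k : ℝ) + 1)))
          + K' * c ^ n / (n.factorial : ℝ) * ((T - s) ^ (n+1) / ((n : ℝ) + 1))) := by
        rw [← hcomp]
        exact hle.trans (add_le_add_right (mul_le_mul_of_nonneg_left hmono2 hc0) B)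
      have hrw : B + c * ((∑ k ∈ Finset.range n,
            B * c ^ k / (k.factorial : ℝ) * ((T - s) ^ (k+1) / ((k : ℝ) + 1)))
          + K' * c ^ n / (n.factorial : ℝ) * ((T - s) ^ (n+1) / ((n : ℝ) + 1)))
          = (∑ k ∈ Finset.range (n+1), B * c ^ k / (k.factorial : ℝ) * (T - s) ^ k)
            + K' * c ^ (n+1) / (((n+1).factorial : ℝ)) * (T - s) ^ (n+1) := by
        rw [Finset.sum_range_succ', mul_add, Finset.mul_sum]
        simp only [hterm]
        simp [Nat.factorial_zero]
        ring
      rw [← hrw]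
      exact hstep
  -- bound each prefix sum by the exponential and pass to the limit
  have hC : ∀ s ∈ Set.Icc t T, u s ≤ B * Real.exp (c * (T - t)) := by
    intro s hs
    have hTs0 : (0:ℝ) ≤ T - s := sub_nonneg.2 hs.2
    have hTt : T - s ≤ T - t := by linarith [hs.1]
    have hall : ∀ n : ℕ,
        u s ≤ B * Real.exp (c * (T - t)) + K' * ((c * (T - t)) ^ n / (n.factorial : ℝ)) := by
      intro n
      have h1 := main n s hs
      have hsum : (∑ k ∈ Finset.range n, B * c ^ k / (k.factorial : ℝ) * (T - s) ^ k)
          ≤ B * Real.exp (c * (T - t)) := by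
        have heq : (∑ k ∈ Finset.range n, B * c ^ k / (k.factorial : ℝ) * (T - s) ^ k)
            = B * ∑ k ∈ Finset.range n, (c * (T - s)) ^ k / (k.factorial : ℝ) := by
          rw [Finset.mul_sum]
          refine Finset.sum_congr rfl fun k _ => ?_
          rw [mul_pow]; ring
        rw [heq]
        have h2 : (∑ k ∈ Finset.range n, (c * (T - s)) ^ k / (k.factorial : ℝ))
            ≤ Real.exp (c * (T - s)) := Real.sum_le_exp_of_nonneg (by positivity) n
        have h3 : Real.exp (c * (T - s)) ≤ Real.exp (c * (T - t)) :=
          Real.exp_le_exp.2 (by nlinarith)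
        exact mul_le_mul_of_nonneg_left (h2.trans h3) hB0
      have hrem : K' * c ^ n / (n.factorial : ℝ) * (T - s) ^ n
          ≤ K' * ((c * (T - t)) ^ n / (n.factorial : ℝ)) := by
        have hfp : (0:ℝ) < (n.factorial : ℝ) := by exact_mod_cast n.factorial_pos
        calc K' * c ^ n / (n.factorial : ℝ) * (T - s) ^ n
            = K' * (c ^ n * (T - s) ^ n / (n.factorial : ℝ)) := by ring
          _ ≤ K' * (c ^ n * (T - t) ^ n / (n.factorial : ℝ)) := by gcongr
          _ = K' * ((c * (T - t)) ^ n / (n.factorial : ℝ)) := by rw [mul_pow]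
      linarith
    have hlim : Filter.Tendsto
        (fun n : ℕ => B * Real.exp (c * (T - t)) + K' * ((c * (T - t)) ^ n / (n.factorial : ℝ)))
        Filter.atTop (nhds (B * Real.exp (c * (T - t)))) := by
      have h := (FloorSemiring.tendsto_pow_div_factorial_atTop (K := ℝ) (c * (T - t))).const_mul K'
      simpa using Filter.Tendsto.const_add (B * Real.exp (c * (T - t))) h
    exact ge_of_tendsto' hlim hall
  refine ⟨hC, ?_⟩
  have htmem : t ∈ Set.Icc t T := ⟨le_rfl, htT⟩
  have hkt := key t htmem
  have huint : (∫ r in t..T, u r) ≤ (T - t) * (B * Real.exp (c * (T - t))) := by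
    have h := intervalIntegral.integral_mono_on htT (hII hu_int t htmem)
      intervalIntegrable_const (fun r hr => hC r hr)
    simp only [intervalIntegral.integral_const, smul_eq_mul] at h
    linarith
  have h2 : c * (∫ r in t..T, u r) ≤ c * ((T - t) * (B * Real.exp (c * (T - t)))) :=
    mul_le_mul_of_nonneg_left huint hc0
  have hu0 := hu_nonneg t htmem
  linarith
end
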